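/- Let Ω ⊆ ℝ² be measurable and f : Ω → ℝ satisfy the weak-L⁴ bound |{x ∈ Ω : |f(x)|⁴ ≥ M}| ≤ C/M for all M ≥ 1 (with C ≥ 1). Then for every ε > 0 the set D_ε = {x ∈ Ω : liminf_{r→0} (1/r)∫_{B_r(x)} f² ≥ ε} contains at most 2¹¹C²π²/ε⁴ points. -/

import Mathlib

open Real MeasureTheory Set Filter

open scoped ENNReal

lemma my_ball_vol (x : EuclideanSpace ℝ (Fin 2)) (r : ℝ) (hr : 0 ≤ r) :
    volume (Metric.ball x r) = ENNReal.ofReal (π * r ^ 2) := by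
  rw [EuclideanSpace.volume_ball, Fintype.card_fin]
  norm_num [Real.Gamma_two]
  rw [← ENNReal.ofReal_pow hr, ← ENNReal.ofReal_pow (Real.sqrt_nonneg _), ← ENNReal.ofReal_mul (by positivity)]
  congr 1
  rw [Real.sq_sqrt Real.pi_pos.le]
  ring

lemma my_extract (u : ℝ → ℝ) (ε : ℝ) (hε : 0 < ε)
    (h : ε ≤ Filter.liminf u (nhdsWithin 0 (Set.Ioi 0))) :
    ∃ ρ > (0:ℝ), ∀ r ∈ Set.Ioc (0:ℝ) ρ, 7/8 * ε ≤ u r := by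
  set s : Set ℝ := {a | ∀ᶠ r in nhdsWithin (0:ℝ) (Set.Ioi 0), a ≤ u r} with hs
  have h' : ε ≤ sSup s := by rw [Filter.liminf_eq] at h; exact h
  have hne : s.Nonempty := by
    by_contra hemp
    rw [Set.not_nonempty_iff_eq_empty] at hemp
    rw [hemp, Real.sSup_empty] at h'
    linarith
  have hbdd : BddAbove s := by
    by_contra hb
    rw [Real.sSup_of_not_bddAbove hb] at h'
    linarith
  obtain ⟨a, has, ha⟩ := exists_lt_of_lt_csSup hne (show 7/8 * ε < sSup s by linarith)
  have has' : ∀ᶠ r in nhdsWithin (0:ℝ) (Set.Ioi 0), a ≤ u r := by simpa [hs] using has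
  have hev : ∀ᶠ r in nhdsWithin (0:ℝ) (Set.Ioi 0), 7/8 * ε ≤ u r :=
    has'.mono fun r hr => le_trans ha.le hr
  rw [eventually_iff, mem_nhdsGT_iff_exists_Ioc_subset] at hev
  obtain ⟨ρ, hρ, hsub⟩ := hev
  exact ⟨ρ, hρ, fun r hr => hsub hr⟩

lemma my_tail (Ω : Set (EuclideanSpace ℝ (Fin 2))) (hΩ : MeasurableSet Ω)
    (f : EuclideanSpace ℝ (Fin 2) → ℝ) (hf : Measurable f)
    (C : ℝ) (hC : 1 ≤ C)
    (hweak : ∀ M : ℝ, 1 ≤ M →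
      volume {x ∈ Ω | M ≤ |f x| ^ 4} ≤ ENNReal.ofReal (C / M))
    (K : ℝ) (hK : 1 ≤ K) :
    ∫⁻ y in Ω ∩ {y | K ≤ (f y)^2}, ENNReal.ofReal ((f y)^2) ≤
      ENNReal.ofReal (6 * C / K) := by
  have hK0 : (0:ℝ) < K := lt_of_lt_of_le one_pos hK
  set T : ℕ → Set (EuclideanSpace ℝ (Fin 2)) :=
    fun k => Ω ∩ {y | 4^k * K ≤ (f y)^2 ∧ (f y)^2 < 4^(k+1) * K} with hT
  -- cover
  have hcover : Ω ∩ {y | K ≤ (f y)^2} ⊆ ⋃ k, T k := by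
    rintro y ⟨hyΩ, hy⟩
    simp only [Set.mem_setOf_eq] at hy
    have hex : ∃ n : ℕ, (f y)^2 < 4^n * K := by
      obtain ⟨n, hn⟩ := pow_unbounded_of_one_lt ((f y)^2 / K) (by norm_num : (1:ℝ) < 4)
      exact ⟨n, by rw [div_lt_iff₀ hK0] at hn; linarith⟩
    classical
    set n0 := Nat.find hex with hn0
    have hfind := Nat.find_spec hex
    have hn0pos : 0 < n0 := by
      rcases Nat.eq_zero_or_pos n0 with h0 | h0
      · exfalso
        have := hn0 ▸ h0
        have hlt : (f y)^2 < 4^(0:ℕ) * K := by rw [← this]; exact hfind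
        simp only [pow_zero, one_mul] at hlt
        linarith
      · exact h0
    refine Set.mem_iUnion.2 ⟨n0 - 1, hyΩ, ?_, ?_⟩
    · have hmin := Nat.find_min hex (m := n0 - 1) (by omega)
      push_neg at hmin
      exact hmin
    · have : n0 - 1 + 1 = n0 := by omega
      rw [this]
      exact hfind
  -- per-piece bound
  have hfm : Measurable fun y => (f y)^2 := hf.pow_const 2
  have hTmeas : ∀ k, MeasurableSet (T k) := by
    intro k
    rw [hT]
    dsimp only
    rw [Set.setOf_and]
    exact hΩ.inter ((measurableSet_le measurable_const hfm).inter
      (measurableSet_lt hfm measurable_const))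
  have hpiece : ∀ k : ℕ, ∫⁻ y in T k, ENNReal.ofReal ((f y)^2) ≤
      ENNReal.ofReal (4 * C / K * (1/4)^k) := by
    intro k
    have h1 : ∫⁻ y in T k, ENNReal.ofReal ((f y)^2) ≤
        ∫⁻ _ in T k, ENNReal.ofReal (4^(k+1) * K) := by
      refine setLIntegral_mono' (hTmeas k) fun y hy => ?_
      exact ENNReal.ofReal_le_ofReal hy.2.2.le
    rw [setLIntegral_const] at h1
    have h2 : volume (T k) ≤ ENNReal.ofReal (C / (4^k * K)^2) := by
      refine le_trans (measure_mono ?_) (hweak ((4^k*K)^2) (by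
        have h1k : (1:ℝ) ≤ 4^k := one_le_pow₀ (by norm_num)
        have h2k : (1:ℝ) ≤ 4^k * K := by nlinarith
        nlinarith))
      rintro y ⟨hyΩ, hy1, _⟩
      refine ⟨hyΩ, ?_⟩
      have : ((f y)^2)^2 = |f y|^4 := by
        rw [← abs_pow]
        rw [abs_of_nonneg (by positivity)]
        ring
      rw [← this]
      have h4k : (0:ℝ) < 4^k * K := by positivity
      nlinarith
    calc ∫⁻ y in T k, ENNReal.ofReal ((f y)^2)
        ≤ ENNReal.ofReal (4^(k+1) * K) * ENNReal.ofReal (C / (4^k * K)^2) := by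
          exact le_trans h1 (mul_le_mul_right h2 _)
      _ = ENNReal.ofReal (4^(k+1) * K * (C / (4^k * K)^2)) := by
          rw [← ENNReal.ofReal_mul (by positivity)]
      _ = ENNReal.ofReal (4 * C / K * (1/4)^k) := by
          congr 1
          have h4k : (0:ℝ) < 4^k := by positivity
          rw [one_div_pow]
          field_simp
          ring
  -- combine
  calc ∫⁻ y in Ω ∩ {y | K ≤ (f y)^2}, ENNReal.ofReal ((f y)^2)
      ≤ ∫⁻ y in ⋃ k, T k, ENNReal.ofReal ((f y)^2) := lintegral_mono_set hcover
    _ ≤ ∑' k, ∫⁻ y in T k, ENNReal.ofReal ((f y)^2) := lintegral_iUnion_le _ _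
    _ ≤ ∑' k : ℕ, ENNReal.ofReal (4 * C / K * (1/4)^k) := ENNReal.tsum_le_tsum hpiece
    _ = ENNReal.ofReal (∑' k : ℕ, 4 * C / K * (1/4)^k) := by
        rw [ENNReal.ofReal_tsum_of_nonneg (fun k => by positivity)
          (Summable.mul_left _ (summable_geometric_of_lt_one (by norm_num) (by norm_num)))]
    _ ≤ ENNReal.ofReal (6 * C / K) := by
        apply ENNReal.ofReal_le_ofReal
        rw [tsum_mul_left, tsum_geometric_of_lt_one (by norm_num) (by norm_num)]
        rw [div_mul_eq_mul_div, div_le_div_iff₀ hK0 hK0]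
        nlinarith

lemma my_avol (Ω : Set (EuclideanSpace ℝ (Fin 2))) (hΩ : MeasurableSet Ω)
    (f : EuclideanSpace ℝ (Fin 2) → ℝ) (hf : Measurable f)
    (C : ℝ) (hC : 1 ≤ C)
    (hweak : ∀ M : ℝ, 1 ≤ M →
      volume {x ∈ Ω | M ≤ |f x| ^ 4} ≤ ENNReal.ofReal (C / M))
    (x : EuclideanSpace ℝ (Fin 2)) (ε r : ℝ) (hε : 0 < ε) (hr0 : 0 < r)
    (hK1 : 1 ≤ 24*C/(ε*r))
    (h78 : 7/8*ε ≤ (1/r) * ∫ y in Metric.ball x r ∩ Ω, (f y)^2) :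
    ENNReal.ofReal (ε^2*r^2/(192*C)) ≤
      volume ((Metric.ball x r ∩ Ω) ∩
        {y | ε/(2*π*r) ≤ (f y)^2 ∧ (f y)^2 < 24*C/(ε*r)}) := by
  have hC0 : (0:ℝ) < C := lt_of_lt_of_le one_pos hC
  have hπ : (0:ℝ) < π := Real.pi_pos
  set L : ℝ := ε/(2*π*r) with hLdef
  set K : ℝ := 24*C/(ε*r) with hKdef
  have hL0 : 0 < L := by positivity
  have hK0 : (0:ℝ) < K := by positivity
  have hfm : Measurable fun y => (f y)^2 := hf.pow_const 2
  set B := Metric.ball x r ∩ Ω with hB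
  have hBmeas : MeasurableSet B := Metric.isOpen_ball.measurableSet.inter hΩ
  set SA := B ∩ {y | L ≤ (f y)^2 ∧ (f y)^2 < K} with hSA
  set Slow := B ∩ {y | (f y)^2 < L} with hSlow
  set Stail := B ∩ {y | K ≤ (f y)^2} with hStail
  have hSAmeas : MeasurableSet SA := by
    rw [hSA, Set.setOf_and]
    exact hBmeas.inter ((measurableSet_le measurable_const hfm).inter
      (measurableSet_lt hfm measurable_const))
  have hSlowmeas : MeasurableSet Slow :=
    hBmeas.inter (measurableSet_lt hfm measurable_const)
  -- lower bound on the Bochner integral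
  have h78' : 7/8*ε*r ≤ ∫ y in B, (f y)^2 := by
    have h2 := mul_le_mul_of_nonneg_left h78 hr0.le
    have h3 : r * (1/r * ∫ y in B, (f y)^2) = ∫ y in B, (f y)^2 := by
      field_simp
    rw [h3] at h2
    linarith
  have hBint : ∫ y in B, (f y)^2 = (∫⁻ y in B, ENNReal.ofReal ((f y)^2)).toReal :=
    integral_eq_lintegral_of_nonneg_ae (ae_of_all _ fun y => sq_nonneg _)
      hfm.aestronglyMeasurable
  set I := ∫⁻ y in B, ENNReal.ofReal ((f y)^2) with hI
  have hIlb : ENNReal.ofReal (7/8*ε*r) ≤ I := by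
    rcases eq_top_or_lt_top I with h | h
    · rw [h]; exact le_top
    · rw [← ENNReal.ofReal_toReal h.ne]
      refine ENNReal.ofReal_le_ofReal ?_
      rw [hBint] at h78'
      exact h78'
  -- split
  have hcover : B ⊆ Slow ∪ (SA ∪ Stail) := by
    intro y hy
    by_cases h1 : (f y)^2 < L
    · exact Or.inl ⟨hy, h1⟩
    by_cases h2 : K ≤ (f y)^2
    · exact Or.inr (Or.inr ⟨hy, h2⟩)
    · exact Or.inr (Or.inl ⟨hy, not_lt.1 h1, not_le.1 h2⟩)
  have hsplit : I ≤ (∫⁻ y in Slow, ENNReal.ofReal ((f y)^2)) +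
      ((∫⁻ y in SA, ENNReal.ofReal ((f y)^2)) +
       (∫⁻ y in Stail, ENNReal.ofReal ((f y)^2))) := by
    refine le_trans (lintegral_mono_set hcover) ?_
    refine le_trans (lintegral_union_le _ _ _) ?_
    exact add_le_add_right (lintegral_union_le _ _ _) _
  -- low bound
  have hlow : (∫⁻ y in Slow, ENNReal.ofReal ((f y)^2)) ≤ ENNReal.ofReal (ε*r/2) := by
    calc (∫⁻ y in Slow, ENNReal.ofReal ((f y)^2))
        ≤ ∫⁻ _ in Slow, ENNReal.ofReal L :=
          setLIntegral_mono' hSlowmeas fun y hy => ENNReal.ofReal_le_ofReal hy.2.le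
      _ = ENNReal.ofReal L * volume Slow := setLIntegral_const _ _
      _ ≤ ENNReal.ofReal L * volume (Metric.ball x r) := by
          refine mul_le_mul_right (measure_mono ?_) _
          exact Set.inter_subset_left.trans Set.inter_subset_left
      _ = ENNReal.ofReal L * ENNReal.ofReal (π * r^2) := by rw [my_ball_vol x r hr0.le]
      _ = ENNReal.ofReal (L * (π * r^2)) := by rw [← ENNReal.ofReal_mul hL0.le]
      _ = ENNReal.ofReal (ε*r/2) := by
          congr 1
          rw [hLdef]
          field_simp
  -- tail bound
  have htail : (∫⁻ y in Stail, ENNReal.ofReal ((f y)^2)) ≤ ENNReal.ofReal (ε*r/4) := by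
    calc (∫⁻ y in Stail, ENNReal.ofReal ((f y)^2))
        ≤ ∫⁻ y in Ω ∩ {y | K ≤ (f y)^2}, ENNReal.ofReal ((f y)^2) := by
          refine lintegral_mono_set ?_
          rintro y ⟨⟨_, hyΩ⟩, hy⟩
          exact ⟨hyΩ, hy⟩
      _ ≤ ENNReal.ofReal (6*C/K) := my_tail Ω hΩ f hf C hC hweak K hK1
      _ = ENNReal.ofReal (ε*r/4) := by
          congr 1
          rw [hKdef]
          field_simp
          ring
  -- middle bound
  have hmid : (∫⁻ y in SA, ENNReal.ofReal ((f y)^2)) ≤ ENNReal.ofReal K * volume SA := by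
    calc (∫⁻ y in SA, ENNReal.ofReal ((f y)^2))
        ≤ ∫⁻ _ in SA, ENNReal.ofReal K :=
          setLIntegral_mono' hSAmeas fun y hy => ENNReal.ofReal_le_ofReal hy.2.2.le
      _ = ENNReal.ofReal K * volume SA := setLIntegral_const _ _
  -- volume SA is finite
  have hfin : volume SA ≠ ⊤ := by
    refine ne_top_of_le_ne_top ?_ (measure_mono
      (show SA ⊆ Metric.ball x r from Set.inter_subset_left.trans Set.inter_subset_left))
    rw [my_ball_vol x r hr0.le]
    exact ENNReal.ofReal_ne_top
  set a : ℝ := (volume SA).toReal with ha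
  have ha0 : 0 ≤ a := ENNReal.toReal_nonneg
  have hva : volume SA = ENNReal.ofReal a := (ENNReal.ofReal_toReal hfin).symm
  have hcomb : ENNReal.ofReal (7/8*ε*r) ≤ ENNReal.ofReal (ε*r/2 + (K*a + ε*r/4)) := by
    refine le_trans hIlb (le_trans hsplit ?_)
    rw [ENNReal.ofReal_add (by positivity) (by positivity),
      ENNReal.ofReal_add (by positivity) (by positivity),
      ENNReal.ofReal_mul hK0.le, ← hva]
    exact add_le_add hlow (add_le_add hmid htail)
  have hreal : 7/8*ε*r ≤ ε*r/2 + (K*a + ε*r/4) :=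
    (ENNReal.ofReal_le_ofReal_iff (by positivity)).1 hcomb
  have haK : ε*r/8 ≤ K*a := by linarith
  have hafinal : ε^2*r^2/(192*C) ≤ a := by
    rw [hKdef, div_mul_eq_mul_div, le_div_iff₀ (by positivity)] at haK
    rw [div_le_iff₀ (by positivity)]
    nlinarith
  rw [hva]
  exact ENNReal.ofReal_le_ofReal hafinal

lemma my_final (C ε r N : ℝ) (hC : 1 ≤ C) (hε : 0 < ε) (hr : 0 < r)
    (h : N * (ε^2*r^2/(192*C)) ≤ C/(ε/(2*π*r))^2) :
    N ≤ 2^11 * C^2 * π^2 / ε^4 := by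
  have hC0 : (0:ℝ) < C := lt_of_lt_of_le one_pos hC
  have hπ : (0:ℝ) < π := Real.pi_pos
  have hCL : C/(ε/(2*π*r))^2 = 4*C*π^2*r^2/ε^2 := by
    field_simp
    ring
  rw [hCL] at h
  have hX : (0:ℝ) ≤ C^2*π^2 := by positivity
  calc N = N * (ε^2*r^2/(192*C)) * (192*C/(ε^2*r^2)) := by field_simp
    _ ≤ (4*C*π^2*r^2/ε^2) * (192*C/(ε^2*r^2)) :=
        mul_le_mul_of_nonneg_right h (by positivity)
    _ = 768*C^2*π^2/ε^4 := by field_simp; ring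
    _ ≤ 2^11*C^2*π^2/ε^4 := by
        apply div_le_div_of_nonneg_right ?_ (by positivity)
        · nlinarith

/-- if `f` satisfies the weak-`L⁴` bound
`|{x ∈ Ω : |f|⁴ ≥ M}| ≤ C/M` for `M ≥ 1`, then for every `ε > 0` the set
`D_ε = {x ∈ Ω : liminf_{r→0⁺} r⁻¹ ∫_{B_r(x)} f² ≥ ε}` contains at most
`2¹¹ C² π² / ε⁴` points. -/
theorem stmt4 (Ω : Set (EuclideanSpace ℝ (Fin 2))) (hΩ : MeasurableSet Ω)
    (f : EuclideanSpace ℝ (Fin 2) → ℝ) (hf : Measurable f)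
    (C : ℝ) (hC : 1 ≤ C)
    (hweak : ∀ M : ℝ, 1 ≤ M →
      volume {x ∈ Ω | M ≤ |f x| ^ 4} ≤ ENNReal.ofReal (C / M))
    (ε : ℝ) (hε : 0 < ε) :
    ∀ S : Finset (EuclideanSpace ℝ (Fin 2)),
      (↑S ⊆ {x | x ∈ Ω ∧ ε ≤ Filter.liminf
          (fun r : ℝ => (1/r) * ∫ y in Metric.ball x r ∩ Ω, (f y)^2)
          (nhdsWithin 0 (Set.Ioi 0))}) →
      (S.card : ℝ) ≤ 2^11 * C^2 * π^2 / ε^4 := by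
  classical
  intro S hS
  have hC0 : (0:ℝ) < C := lt_of_lt_of_le one_pos hC
  have hπ : (0:ℝ) < π := Real.pi_pos
  rcases S.eq_empty_or_nonempty with rfl | hSne
  · simp only [Finset.card_empty, Nat.cast_zero]
    positivity
  obtain ⟨x₀, hx₀⟩ := hSne
  haveI : Nonempty {y // y ∈ S} := ⟨⟨x₀, hx₀⟩⟩
  -- per-point radius from liminf
  have key : ∀ x : {y // y ∈ S}, ∃ ρ > (0:ℝ), ∀ r ∈ Set.Ioc (0:ℝ) ρ,
      7/8*ε ≤ (1/r) * ∫ y in Metric.ball (x:EuclideanSpace ℝ (Fin 2)) r ∩ Ω, (f y)^2 :=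
    fun x => my_extract _ ε hε (hS x.2).2
  choose ρ hρpos hρ using key
  -- pairwise distance
  set d : ℝ := if h : S.offDiag.Nonempty then
      (S.offDiag.inf' h fun p => dist p.1 p.2)/2 else 1 with hd
  have hdpos : 0 < d := by
    rw [hd]
    split_ifs with h
    · have : ∀ p ∈ S.offDiag, 0 < dist p.1 p.2 := fun p hp =>
        dist_pos.2 (Finset.mem_offDiag.1 hp).2.2
      have := (Finset.lt_inf'_iff h).2 this
      linarith
    · norm_num
  have hdist : ∀ x ∈ S, ∀ y ∈ S, x ≠ y → 2*d ≤ dist x y := by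
    intro x hx y hy hxy
    have hmem : (x, y) ∈ S.offDiag := Finset.mem_offDiag.2 ⟨hx, hy, hxy⟩
    have hne : S.offDiag.Nonempty := ⟨_, hmem⟩
    rw [hd, dif_pos hne]
    have := Finset.inf'_le (fun p : _ × _ => dist p.1 p.2) hmem
    simp only at this
    linarith
  set ρm : ℝ := Finset.univ.inf' Finset.univ_nonempty ρ with hρm
  have hρm0 : 0 < ρm := by
    rw [hρm]
    exact (Finset.lt_inf'_iff Finset.univ_nonempty).2 fun x _ => hρpos x
  set r : ℝ := min (min (ε/(2*π)) (24*C/ε)) (min ρm d) with hrdef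
  have hr0 : 0 < r := lt_min (lt_min (by positivity) (by positivity)) (lt_min hρm0 hdpos)
  set L : ℝ := ε/(2*π*r) with hLdef
  set K : ℝ := 24*C/(ε*r) with hKdef
  have hL0 : 0 < L := by positivity
  have hK0 : 0 < K := by positivity
  have hL1 : 1 ≤ L := by
    rw [hLdef, le_div_iff₀ (by positivity)]
    have : r ≤ ε/(2*π) := le_trans (min_le_left _ _) (min_le_left _ _)
    rw [le_div_iff₀ (by positivity)] at this
    linarith
  have hK1 : 1 ≤ K := by
    rw [hKdef, le_div_iff₀ (by positivity)]
    have : r ≤ 24*C/ε := le_trans (min_le_left _ _) (min_le_right _ _)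
    rw [le_div_iff₀ (by positivity)] at this
    linarith
  have hfm : Measurable fun y => (f y)^2 := hf.pow_const 2
  set A : EuclideanSpace ℝ (Fin 2) → Set (EuclideanSpace ℝ (Fin 2)) :=
    fun x => (Metric.ball x r ∩ Ω) ∩ {y | L ≤ (f y)^2 ∧ (f y)^2 < K} with hA
  have hAmeas : ∀ x, MeasurableSet (A x) := by
    intro x
    rw [hA]; dsimp only
    rw [Set.setOf_and]
    exact (Metric.isOpen_ball.measurableSet.inter hΩ).inter
      ((measurableSet_le measurable_const hfm).inter (measurableSet_lt hfm measurable_const))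
  have hAsub : ∀ x, A x ⊆ {y ∈ Ω | L^2 ≤ |f y|^4} := by
    intro x y hy
    obtain ⟨⟨_, hyΩ⟩, hy1, _⟩ := hy
    refine ⟨hyΩ, ?_⟩
    have habs : ((f y)^2)^2 = |f y|^4 := by
      rw [← abs_pow, abs_of_nonneg (by positivity)]; ring
    rw [← habs]
    nlinarith
  -- main volume lower bound
  have hm0 : (0:ℝ) < ε^2*r^2/(192*C) := by positivity
  have hAvol : ∀ x ∈ S, ENNReal.ofReal (ε^2*r^2/(192*C)) ≤ volume (A x) := by
    intro x hx
    have hrρ : r ≤ ρ ⟨x, hx⟩ :=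
      le_trans (le_trans (min_le_right _ _) (min_le_left _ _))
        (Finset.inf'_le ρ (Finset.mem_univ _))
    exact my_avol Ω hΩ f hf C hC hweak x ε r hε hr0 hK1 (hρ ⟨x, hx⟩ r ⟨hr0, hrρ⟩)
  -- disjointness
  have hdisj : (↑S : Set (EuclideanSpace ℝ (Fin 2))).PairwiseDisjoint A := by
    intro x hx y hy hxy
    have hballs : Disjoint (Metric.ball x r) (Metric.ball y r) :=
      Metric.ball_disjoint_ball (by
        have := hdist x hx y hy hxy
        have hrd : r ≤ d := le_trans (min_le_right _ _) (min_le_right _ _)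
        linarith)
    exact hballs.mono (Set.inter_subset_left.trans Set.inter_subset_left)
      (Set.inter_subset_left.trans Set.inter_subset_left)
  -- counting
  have hcount : (S.card : ℝ≥0∞) * ENNReal.ofReal (ε^2*r^2/(192*C)) ≤
      ENNReal.ofReal (C/L^2) := by
    calc (S.card : ℝ≥0∞) * ENNReal.ofReal (ε^2*r^2/(192*C))
        = S.card • ENNReal.ofReal (ε^2*r^2/(192*C)) := by rw [nsmul_eq_mul]
      _ ≤ ∑ x ∈ S, volume (A x) := Finset.card_nsmul_le_sum S _ _ (fun x hx => hAvol x hx)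
      _ = volume (⋃ x ∈ S, A x) := (measure_biUnion_finset hdisj fun b _ => hAmeas b).symm
      _ ≤ volume {y ∈ Ω | L^2 ≤ |f y|^4} := measure_mono (Set.iUnion₂_subset fun x _ => hAsub x)
      _ ≤ ENNReal.ofReal (C/L^2) := hweak _ (one_le_pow₀ hL1)
  -- convert to ℝ
  have h1 : ENNReal.ofReal ((S.card:ℝ) * (ε^2*r^2/(192*C))) ≤ ENNReal.ofReal (C/L^2) := by
    rw [ENNReal.ofReal_mul (Nat.cast_nonneg _), ENNReal.ofReal_natCast]
    exact hcount
  have hreal : (S.card : ℝ) * (ε^2*r^2/(192*C)) ≤ C/L^2 :=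
    (ENNReal.ofReal_le_ofReal_iff (by positivity)).1 h1
  rw [hLdef] at hreal
  exact my_final C ε r _ hC hε hr0 hreal
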